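/- Let n ≥ 1, let m be a permutation of {1, …, n}, and let p₁, …, pₙ and q₁, …, q_{n−1} be elements of {+1, −1}. Define vectors Q₁ := p₁ e_{m(1)} and Q_{i+1} := q_i e_{m(i)} + p_{i+1} e_{m(i+1)} for 1 ≤ i ≤ n − 1, and set M(i) := max{ m(j) : i ≤ j ≤ n }. Then there exists a real number α₀ ≥ 1 such that for every real α > α₀: the family (Q₁, …, Qₙ) is η_α-oriented if and only if pₙ = +1 and, for every 1 ≤ i ≤ n − 1, one has pᵢ qᵢ = −1 whenever M(i) > m(i), and pᵢ = +1 whenever M(i) = m(i). -/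

import Mathlib

/-- A family `(Q₁, …, Qₘ)` of vectors in `ℝⁿ` is `η`-oriented if `η` is a
strictly positive linear combination of the `Qₖ`. -/
def EtaOriented {n m : ℕ} (η : Fin n → ℝ) (Q : Fin m → Fin n → ℝ) : Prop :=
  ∃ a : Fin m → ℝ, (∀ k, 0 < a k) ∧ ∑ k, a k • Q k = η

/-- The vector `η_α = (1, α, α², …, α^{n−1}) ∈ ℝⁿ`. -/
def etaVec (n : ℕ) (α : ℝ) : Fin n → ℝ := fun i => α ^ (i : ℕ)

/-- `M i = max { m j : j ≥ i }` (as a natural number, `m` a permutation). -/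
def maxLabel {n : ℕ} (m : Equiv.Perm (Fin n)) (i : Fin n) : ℕ :=
  (Finset.Ici i).sup fun j => (m j : ℕ)

namespace STDR

noncomputable def sol (n : ℕ) (P q : ℕ → ℝ) (mn : ℕ → ℕ) (α : ℝ) : ℕ → ℝ := fun l =>
  if h : l + 1 < n then P l * (α ^ mn l - q l * sol n P q mn α (l + 1))
  else P l * α ^ mn l
termination_by l => n - l
decreasing_by omega

def Mx (n : ℕ) (mn : ℕ → ℕ) (l : ℕ) : ℕ := (Finset.Ico l n).sup mn

def Cond (n : ℕ) (P q : ℕ → ℝ) (mn : ℕ → ℕ) (l : ℕ) : Prop :=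
  (mn l < Mx n mn l → P l * q l = -1) ∧ (Mx n mn l = mn l → P l = 1)

variable {n : ℕ} {P q : ℕ → ℝ} {mn : ℕ → ℕ} {α : ℝ}

lemma sol_last {l : ℕ} (h : ¬ l + 1 < n) :
    sol n P q mn α l = P l * α ^ mn l := by
  rw [sol]; simp [h]

lemma sol_step {l : ℕ} (h : l + 1 < n) :
    sol n P q mn α l = P l * (α ^ mn l - q l * sol n P q mn α (l + 1)) := by
  rw [sol]; simp [h]

lemma mn_le_Mx {l : ℕ} (h : l < n) : mn l ≤ Mx n mn l :=
  Finset.le_sup (by simp [Finset.mem_Ico]; omega)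

lemma Mx_succ_le {l : ℕ} : Mx n mn (l + 1) ≤ Mx n mn l :=
  Finset.sup_mono (Finset.Ico_subset_Ico (by omega) le_rfl)

lemma Mx_last {l : ℕ} (h : l < n) (h2 : ¬ l + 1 < n) : Mx n mn l = mn l := by
  have : Finset.Ico l n = {l} := by
    apply Finset.eq_singleton_iff_unique_mem.2
    constructor
    · simp [Finset.mem_Ico]; omega
    · intro x hx; simp [Finset.mem_Ico] at hx; omega
  rw [Mx, this, Finset.sup_singleton]

lemma Mx_eq_max {l : ℕ} (h : l + 1 < n) : Mx n mn l = max (mn l) (Mx n mn (l + 1)) := by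
  rw [Mx, Mx, ← Finset.sup_insert]
  congr 1
  rw [(by ext x; simp only [Finset.mem_Ico, Finset.mem_Ioo]; omega : Finset.Ico (l + 1) n = Finset.Ioo l n), Finset.Ioo_insert_left (by omega : l < n)]

lemma Mx_exists {l : ℕ} (h : l < n) : ∃ j, l ≤ j ∧ j < n ∧ mn j = Mx n mn l := by
  have hne : (Finset.Ico l n).Nonempty := ⟨l, by simp [Finset.mem_Ico]; omega⟩
  obtain ⟨j, hj, hj2⟩ := Finset.exists_mem_eq_sup _ hne mn
  simp [Finset.mem_Ico] at hj
  exact ⟨j, hj.1, hj.2, hj2.symm⟩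

lemma pm_abs {x : ℝ} (h : x = 1 ∨ x = -1) : |x| = 1 := by
  rcases h with h | h <;> simp [h]

/-- Crude bound on the solution. -/
lemma sol_abs_le (hα : 1 ≤ α)
    (hP : ∀ i, i < n → P i = 1 ∨ P i = -1) (hq : ∀ i, i + 1 < n → q i = 1 ∨ q i = -1)
    (l : ℕ) (hl : l < n) :
    |sol n P q mn α l| ≤ ((n - l : ℕ) : ℝ) * α ^ Mx n mn l := by
  have hα0 : (0:ℝ) < α := lt_of_lt_of_le one_pos hα
  have hpow : (0:ℝ) < α ^ Mx n mn l := pow_pos hα0 _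
  have hmn : α ^ mn l ≤ α ^ Mx n mn l := pow_le_pow_right₀ hα (mn_le_Mx hl)
  by_cases h : l + 1 < n
  · have IH := sol_abs_le hα hP hq (l + 1) h
    have hM : α ^ Mx n mn (l+1) ≤ α ^ Mx n mn l := pow_le_pow_right₀ hα Mx_succ_le
    rw [sol_step h]
    rw [abs_mul, pm_abs (hP l hl), one_mul]
    have h1 : |α ^ mn l - q l * sol n P q mn α (l+1)|
        ≤ α ^ mn l + 1 * |sol n P q mn α (l+1)| := by
      rw [one_mul]
      calc |α ^ mn l - q l * sol n P q mn α (l+1)|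
          ≤ |α ^ mn l| + |q l * sol n P q mn α (l+1)| := abs_sub _ _
        _ = α ^ mn l + |sol n P q mn α (l+1)| := by
            rw [abs_mul, pm_abs (hq l h), one_mul, abs_of_pos (pow_pos hα0 _)]
    have h2 : |sol n P q mn α (l+1)| ≤ ((n - (l+1) : ℕ) : ℝ) * α ^ Mx n mn l := by
      calc |sol n P q mn α (l+1)| ≤ ((n - (l+1) : ℕ) : ℝ) * α ^ Mx n mn (l+1) := IH
        _ ≤ _ := by
            apply mul_le_mul_of_nonneg_left hM (by positivity)
    have h3 : ((n - (l+1) : ℕ) : ℝ) + 1 = ((n - l : ℕ) : ℝ) := by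
      have : (n - (l+1)) + 1 = n - l := by omega
      exact_mod_cast congrArg (Nat.cast : ℕ → ℝ) this
    nlinarith [abs_nonneg (sol n P q mn α (l+1))]
  · rw [sol_last h, abs_mul, pm_abs (hP l hl), one_mul, abs_of_pos (pow_pos hα0 _)]
    have : (1:ℝ) ≤ ((n - l : ℕ) : ℝ) := by
      have : 1 ≤ n - l := by omega
      exact_mod_cast this
    nlinarith
termination_by n - l
decreasing_by omega

end STDR

namespace STDR

variable {n : ℕ} {P q : ℕ → ℝ} {mn : ℕ → ℕ} {α : ℝ}

/-- Gap lemma: if injective labels, the max over the tail is strictly below `mn l`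
when `Mx l = mn l` and the tail is nonempty. -/
lemma Mx_succ_lt (hinj : ∀ i, i < n → ∀ j, j < n → mn i = mn j → i = j)
    {l : ℕ} (h : l + 1 < n) (he : Mx n mn l = mn l) : Mx n mn (l + 1) < mn l := by
  obtain ⟨j, hj1, hj2, hj3⟩ := Mx_exists (mn := mn) (show l + 1 < n from h)
  have hle : Mx n mn (l + 1) ≤ mn l := he ▸ Mx_succ_le
  rcases lt_or_eq_of_le hle with h' | h'
  · exact h'
  · exfalso
    have := hinj j hj2 l (by omega) (by rw [hj3, h'])
    omega

/-- Positive case: if all conditions hold from `l` on, the solution is bounded below. -/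
lemma sol_pos_bound (hα : 1 ≤ α)
    (hP : ∀ i, i < n → P i = 1 ∨ P i = -1) (hq : ∀ i, i + 1 < n → q i = 1 ∨ q i = -1)
    (hinj : ∀ i, i < n → ∀ j, j < n → mn i = mn j → i = j)
    (l : ℕ) (hl : l < n) (hc : ∀ i, l ≤ i → i < n → Cond n P q mn i) :
    α ^ Mx n mn l - ((n - 1 - l : ℕ) : ℝ) * α ^ (Mx n mn l - 1) ≤ sol n P q mn α l := by
  have hα0 : (0:ℝ) < α := lt_of_lt_of_le one_pos hα
  by_cases h : l + 1 < n
  · rcases (lt_or_eq_of_le (mn_le_Mx hl : mn l ≤ Mx n mn l)) with hlt | heq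
    · -- Mx l > mn l : condition gives P l * q l = -1, and Mx l = Mx (l+1)
      have hpq : P l * q l = -1 := (hc l le_rfl hl).1 hlt
      have hMM : Mx n mn l = Mx n mn (l + 1) := by
        have := Mx_eq_max (mn := mn) h
        omega
      have IH := sol_pos_bound hα hP hq hinj (l + 1) h
        (fun i hi hi' => hc i (by omega) hi')
      have hsol : sol n P q mn α l = P l * α ^ mn l + sol n P q mn α (l + 1) := by
        rw [sol_step h]
        calc P l * (α ^ mn l - q l * sol n P q mn α (l+1))
            = P l * α ^ mn l - (P l * q l) * sol n P q mn α (l+1) := by ring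
          _ = P l * α ^ mn l + sol n P q mn α (l+1) := by rw [hpq]; ring
      rw [hsol]
      have hmn1 : α ^ mn l ≤ α ^ (Mx n mn l - 1) := pow_le_pow_right₀ hα (by omega)
      have hPb : -α ^ mn l ≤ P l * α ^ mn l := by
        rcases hP l hl with h' | h' <;> rw [h'] <;> nlinarith [pow_pos hα0 (mn l)]
      have hcast : ((n - 1 - (l+1) : ℕ) : ℝ) + 1 = ((n - 1 - l : ℕ) : ℝ) := by
        have : (n - 1 - (l+1)) + 1 = n - 1 - l := by omega
        exact_mod_cast congrArg (Nat.cast : ℕ → ℝ) this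
      rw [← hMM] at IH
      have hmul : ((n - 1 - (l+1) : ℕ) : ℝ) * α ^ (Mx n mn l - 1) + α ^ (Mx n mn l - 1)
          = ((n - 1 - l : ℕ) : ℝ) * α ^ (Mx n mn l - 1) := by rw [← hcast]; ring
      linarith
    · -- Mx l = mn l : condition gives P l = 1
      have hp1 : P l = 1 := (hc l le_rfl hl).2 heq.symm
      have hMlt : Mx n mn (l + 1) < mn l := Mx_succ_lt hinj h heq.symm
      have habs := sol_abs_le (mn := mn) hα hP hq (l + 1) h
      have hM1 : α ^ Mx n mn (l+1) ≤ α ^ (Mx n mn l - 1) :=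
        pow_le_pow_right₀ hα (by omega)
      have h2 : |sol n P q mn α (l+1)| ≤ ((n - 1 - l : ℕ) : ℝ) * α ^ (Mx n mn l - 1) := by
        calc |sol n P q mn α (l+1)| ≤ ((n - (l+1) : ℕ) : ℝ) * α ^ Mx n mn (l+1) := habs
          _ ≤ ((n - 1 - l : ℕ) : ℝ) * α ^ (Mx n mn l - 1) := by
              have : (n - (l+1)) = n - 1 - l := by omega
              rw [this]
              exact mul_le_mul_of_nonneg_left hM1 (by positivity)
      rw [sol_step h, hp1, one_mul, ← heq]
      have := abs_le.1 h2
      have hqs : q l * sol n P q mn α (l+1) ≤ ((n - 1 - l : ℕ) : ℝ) * α ^ (Mx n mn l - 1) := by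
        calc q l * sol n P q mn α (l+1) ≤ |q l * sol n P q mn α (l+1)| := le_abs_self _
          _ = |sol n P q mn α (l+1)| := by rw [abs_mul, pm_abs (hq l h), one_mul]
          _ ≤ _ := h2
      rw [← heq] at hqs
      linarith
  · -- last index
    have heq : Mx n mn l = mn l := Mx_last hl h
    have hp1 : P l = 1 := (hc l le_rfl hl).2 heq
    rw [sol_last h, hp1, one_mul, heq]
    have : (0:ℝ) ≤ ((n - 1 - l : ℕ) : ℝ) * α ^ (mn l - 1) := by positivity
    linarith
termination_by n - l
decreasing_by omega

end STDR

namespace STDR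

variable {n : ℕ} {P q : ℕ → ℝ} {mn : ℕ → ℕ} {α : ℝ}

/-- Negative case: conditions hold strictly after `l` but fail at `l`. -/
lemma sol_neg_bound (hα : 1 ≤ α)
    (hP : ∀ i, i < n → P i = 1 ∨ P i = -1) (hq : ∀ i, i + 1 < n → q i = 1 ∨ q i = -1)
    (hinj : ∀ i, i < n → ∀ j, j < n → mn i = mn j → i = j)
    (l : ℕ) (hl : l < n) (hc : ∀ i, l + 1 ≤ i → i < n → Cond n P q mn i)
    (hf : ¬ Cond n P q mn l) :
    sol n P q mn α l ≤ -(α ^ Mx n mn l - ((n - 1 - l : ℕ) : ℝ) * α ^ (Mx n mn l - 1)) := by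
  have hα0 : (0:ℝ) < α := lt_of_lt_of_le one_pos hα
  -- decode failure of the condition
  have hfail : (mn l < Mx n mn l ∧ P l * q l = 1) ∨ (Mx n mn l = mn l ∧ P l = -1) := by
    rcases lt_or_eq_of_le (mn_le_Mx (mn := mn) hl) with hlt | heq
    · left
      have h : l + 1 < n := by
        by_contra hnn
        have := Mx_last (mn := mn) hl hnn
        omega
      refine ⟨hlt, ?_⟩
      have hne : ¬ (P l * q l = -1) :=
        fun hpq => hf ⟨fun _ => hpq, fun he => absurd he (by omega)⟩
      rcases hP l hl with h1 | h1 <;> rcases hq l h with h2 | h2 <;>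
        rw [h1, h2] at hne ⊢ <;> norm_num at hne <;> norm_num
    · right
      refine ⟨heq.symm, ?_⟩
      rcases hP l hl with h1 | h1
      · exfalso; exact hf ⟨fun hlt => by omega, fun _ => h1⟩
      · exact h1
  rcases hfail with ⟨hlt, hpq⟩ | ⟨heq, hp1⟩
  · -- Mx l > mn l and P l * q l = 1 (the bad sign)
    have h : l + 1 < n := by
      by_contra hnn
      have : Mx n mn l = mn l := Mx_last hl hnn
      omega
    have hMM : Mx n mn l = Mx n mn (l + 1) := by
      have := Mx_eq_max (mn := mn) h
      omega
    have IH := sol_pos_bound (mn := mn) hα hP hq hinj (l + 1) h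
      (fun i hi hi' => hc i (by omega) hi')
    have hsol : sol n P q mn α l = P l * α ^ mn l - sol n P q mn α (l + 1) := by
      rw [sol_step h]
      calc P l * (α ^ mn l - q l * sol n P q mn α (l+1))
          = P l * α ^ mn l - (P l * q l) * sol n P q mn α (l+1) := by ring
        _ = P l * α ^ mn l - sol n P q mn α (l+1) := by rw [hpq]; ring
    rw [hsol]
    have hmn1 : α ^ mn l ≤ α ^ (Mx n mn l - 1) := pow_le_pow_right₀ hα (by omega)
    have hPb : P l * α ^ mn l ≤ α ^ mn l := by
      rcases hP l hl with h' | h' <;> rw [h'] <;> nlinarith [pow_pos hα0 (mn l)]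
    have hcast : ((n - 1 - (l+1) : ℕ) : ℝ) + 1 = ((n - 1 - l : ℕ) : ℝ) := by
      have : (n - 1 - (l+1)) + 1 = n - 1 - l := by omega
      exact_mod_cast congrArg (Nat.cast : ℕ → ℝ) this
    rw [← hMM] at IH
    have hmul : ((n - 1 - (l+1) : ℕ) : ℝ) * α ^ (Mx n mn l - 1) + α ^ (Mx n mn l - 1)
        = ((n - 1 - l : ℕ) : ℝ) * α ^ (Mx n mn l - 1) := by rw [← hcast]; ring
    linarith
  · -- Mx l = mn l and P l = -1
    by_cases h : l + 1 < n
    · have hMlt : Mx n mn (l + 1) < mn l := Mx_succ_lt hinj h heq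
      have habs := sol_abs_le (mn := mn) hα hP hq (l + 1) h
      have hM1 : α ^ Mx n mn (l+1) ≤ α ^ (Mx n mn l - 1) :=
        pow_le_pow_right₀ hα (by omega)
      have h2 : |sol n P q mn α (l+1)| ≤ ((n - 1 - l : ℕ) : ℝ) * α ^ (Mx n mn l - 1) := by
        calc |sol n P q mn α (l+1)| ≤ ((n - (l+1) : ℕ) : ℝ) * α ^ Mx n mn (l+1) := habs
          _ ≤ ((n - 1 - l : ℕ) : ℝ) * α ^ (Mx n mn l - 1) := by
              have : (n - (l+1)) = n - 1 - l := by omega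
              rw [this]
              exact mul_le_mul_of_nonneg_left hM1 (by positivity)
      have h4 : |q l * sol n P q mn α (l+1)| ≤ ((n - 1 - l : ℕ) : ℝ) * α ^ (Mx n mn l - 1) := by
        rw [abs_mul, pm_abs (hq l h), one_mul]; exact h2
      have hqs := (abs_le.1 h4).2
      rw [heq] at hqs
      rw [sol_step h, hp1, heq]
      linarith
    · have : Mx n mn l = mn l := Mx_last hl h
      rw [sol_last h, hp1, this]
      have : (0:ℝ) ≤ ((n - 1 - l : ℕ) : ℝ) * α ^ (mn l - 1) := by positivity
      linarith

end STDR

namespace STDR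

variable {n : ℕ} {P q : ℕ → ℝ} {mn : ℕ → ℕ} {α : ℝ}

/-- Positivity of the dominant bound for `α > n`. -/
lemma bound_pos (hα : (n : ℝ) < α)
    (hinj : ∀ i, i < n → ∀ j, j < n → mn i = mn j → i = j)
    {l : ℕ} (hl : l < n) :
    0 < α ^ Mx n mn l - ((n - 1 - l : ℕ) : ℝ) * α ^ (Mx n mn l - 1) := by
  have hn : 0 < n := by omega
  have hα1 : (1:ℝ) ≤ α := by
    have : (1:ℝ) ≤ (n:ℝ) := by exact_mod_cast hn
    linarith
  have hα0 : (0:ℝ) < α := lt_of_lt_of_le one_pos hα1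
  rcases Nat.eq_zero_or_pos (Mx n mn l) with hM | hM
  · -- then the interval [l, n) is a singleton
    have hsing : n = l + 1 := by
      by_contra hne
      have h2 : l + 1 < n := by omega
      have h1 : mn l = 0 := by
        have := mn_le_Mx (mn := mn) hl; omega
      have h3 : mn (l+1) = 0 := by
        have := mn_le_Mx (mn := mn) h2
        have := Mx_succ_le (n := n) (mn := mn) (l := l)
        omega
      have := hinj l hl (l+1) h2 (by omega)
      omega
    have : n - 1 - l = 0 := by omega
    rw [hM, this]
    norm_num
  · have hsplit : α ^ Mx n mn l = α * α ^ (Mx n mn l - 1) := by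
      rw [← pow_succ']
      congr 1
      omega
    rw [hsplit]
    have hpow : (0:ℝ) < α ^ (Mx n mn l - 1) := pow_pos hα0 _
    have hc : ((n - 1 - l : ℕ) : ℝ) < α := by
      have h1 : ((n - 1 - l : ℕ) : ℝ) ≤ (n : ℝ) := by
        exact_mod_cast Nat.sub_le _ _ |>.trans (Nat.sub_le _ _)
      linarith
    nlinarith

/-- The solution satisfies the linear system. -/
lemma sol_spec (hP : ∀ i, i < n → P i = 1 ∨ P i = -1) {l : ℕ} (hl : l < n) :
    P l * sol n P q mn α l
      + (if l + 1 < n then q l * sol n P q mn α (l + 1) else 0) = α ^ mn l := by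
  have hP2 : P l * P l = 1 := by rcases hP l hl with h | h <;> rw [h] <;> norm_num
  by_cases h : l + 1 < n
  · rw [sol_step h, if_pos h]
    calc P l * (P l * (α ^ mn l - q l * sol n P q mn α (l+1)))
          + q l * sol n P q mn α (l+1)
        = (P l * P l) * (α ^ mn l - q l * sol n P q mn α (l+1))
          + q l * sol n P q mn α (l+1) := by ring
      _ = α ^ mn l := by rw [hP2]; ring
  · rw [sol_last h, if_neg h]
    calc P l * (P l * α ^ mn l) + 0 = (P l * P l) * α ^ mn l := by ring
      _ = α ^ mn l := by rw [hP2]; ring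

/-- Uniqueness of the solution. -/
lemma sol_unique (hP : ∀ i, i < n → P i = 1 ∨ P i = -1)
    (a : ℕ → ℝ)
    (ha : ∀ l, l < n → P l * a l + (if l + 1 < n then q l * a (l + 1) else 0) = α ^ mn l)
    (l : ℕ) (hl : l < n) : a l = sol n P q mn α l := by
  have hP2 : P l * P l = 1 := by rcases hP l hl with h | h <;> rw [h] <;> norm_num
  by_cases h : l + 1 < n
  · have IH := sol_unique hP a ha (l + 1) h
    have h1 := ha l hl
    rw [if_pos h, IH] at h1
    rw [sol_step h]
    have : P l * (P l * a l + q l * sol n P q mn α (l+1))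
        = P l * α ^ mn l := by rw [h1]
    calc a l = (P l * P l) * a l := by rw [hP2]; ring
      _ = P l * (P l * a l + q l * sol n P q mn α (l+1))
            - (P l * q l) * sol n P q mn α (l+1) := by ring
      _ = P l * α ^ mn l - (P l * q l) * sol n P q mn α (l+1) := by rw [this]
      _ = P l * (α ^ mn l - q l * sol n P q mn α (l+1)) := by ring
  · have h1 := ha l hl
    rw [if_neg h, add_zero] at h1
    rw [sol_last h]
    calc a l = (P l * P l) * a l := by rw [hP2]; ring
      _ = P l * (P l * a l) := by ring
      _ = P l * α ^ mn l := by rw [h1]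
termination_by n - l
decreasing_by omega

end STDR

namespace STDR

lemma Q_apply (n : ℕ) (hn : 0 < n) (m : Equiv.Perm (Fin n)) (p : Fin n → ℝ) (q : ℕ → ℝ)
    (Q : Fin n → Fin n → ℝ)
    (hQ0 : Q ⟨0, hn⟩ = p ⟨0, hn⟩ • (Pi.single (m ⟨0, hn⟩) 1 : Fin n → ℝ))
    (hQs : ∀ i : ℕ, ∀ h : i + 1 < n,
      Q ⟨i + 1, h⟩ = q i • (Pi.single (m ⟨i, Nat.lt_of_succ_lt h⟩) 1 : Fin n → ℝ)
        + p ⟨i + 1, h⟩ • (Pi.single (m ⟨i + 1, h⟩) 1 : Fin n → ℝ))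
    (k i : Fin n) :
    Q k (m i) = (if k = i then p i else 0)
      + (if (k : ℕ) = (i : ℕ) + 1 then q (i : ℕ) else 0) := by
  obtain ⟨kv, hk⟩ := k
  match kv with
  | 0 =>
    have e0 : (⟨0, hk⟩ : Fin n) = ⟨0, hn⟩ := rfl
    rw [e0, hQ0]
    have : (p ⟨0, hn⟩ • (Pi.single (m ⟨0, hn⟩) 1 : Fin n → ℝ)) (m i)
        = p ⟨0, hn⟩ * (if m i = m ⟨0, hn⟩ then 1 else 0) := by
      simp [Pi.single_apply]
    rw [this]
    have h2 : ¬ ((0 : ℕ) = (i : ℕ) + 1) := by omega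
    rw [if_neg h2, add_zero]
    by_cases h : i = ⟨0, hn⟩
    · rw [if_pos (m.injective.eq_iff.2 h), if_pos h.symm, h, mul_one]
    · rw [if_neg (fun he => h (m.injective he)), if_neg (fun he => h he.symm), mul_zero]
  | j + 1 =>
    rw [hQs j hk]
    have : ((q j • (Pi.single (m ⟨j, Nat.lt_of_succ_lt hk⟩) 1 : Fin n → ℝ)
        + p ⟨j + 1, hk⟩ • (Pi.single (m ⟨j + 1, hk⟩) 1 : Fin n → ℝ))) (m i)
        = q j * (if m i = m ⟨j, Nat.lt_of_succ_lt hk⟩ then 1 else 0)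
          + p ⟨j + 1, hk⟩ * (if m i = m ⟨j + 1, hk⟩ then 1 else 0) := by
      simp [Pi.single_apply]
    rw [this]
    by_cases h : i = ⟨j + 1, hk⟩
    · subst h
      simp [EmbeddingLike.apply_eq_iff_eq, Fin.ext_iff]
    · by_cases h3 : (i : ℕ) = j
      · have hij : i = ⟨j, Nat.lt_of_succ_lt hk⟩ := Fin.ext h3
        subst hij
        simp [EmbeddingLike.apply_eq_iff_eq, Fin.ext_iff]
      · have c1 : ¬ m i = m ⟨j, Nat.lt_of_succ_lt hk⟩ :=
          fun he => h3 (congrArg Fin.val (m.injective he))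
        have c2 : ¬ m i = m ⟨j + 1, hk⟩ := fun he => h (m.injective he)
        have c3 : ¬ ((⟨j + 1, hk⟩ : Fin n) = i) := fun he => h he.symm
        have c4 : ¬ (((⟨j + 1, hk⟩ : Fin n) : ℕ) = (i : ℕ) + 1) := by
          simp only [Fin.val_mk]
          omega
        rw [if_neg c1, if_neg c2, if_neg c3, if_neg c4]
        ring

end STDR

namespace STDR

lemma sum_apply_eq (n : ℕ) (hn : 0 < n) (m : Equiv.Perm (Fin n)) (p : Fin n → ℝ) (q : ℕ → ℝ)
    (Q : Fin n → Fin n → ℝ)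
    (hQ0 : Q ⟨0, hn⟩ = p ⟨0, hn⟩ • (Pi.single (m ⟨0, hn⟩) 1 : Fin n → ℝ))
    (hQs : ∀ i : ℕ, ∀ h : i + 1 < n,
      Q ⟨i + 1, h⟩ = q i • (Pi.single (m ⟨i, Nat.lt_of_succ_lt h⟩) 1 : Fin n → ℝ)
        + p ⟨i + 1, h⟩ • (Pi.single (m ⟨i + 1, h⟩) 1 : Fin n → ℝ))
    (a : Fin n → ℝ) (i : Fin n) :
    (∑ k, a k • Q k) (m i) = p i * a i
      + (if h : (i : ℕ) + 1 < n then q (i : ℕ) * a ⟨(i : ℕ) + 1, h⟩ else 0) := by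
  have step1 : (∑ k, a k • Q k) (m i) = ∑ k, a k * Q k (m i) := by
    rw [Finset.sum_apply]
    rfl
  have expand : ∀ k : Fin n, a k * Q k (m i)
      = (if k = i then a k * p i else 0)
        + (if (k : ℕ) = (i : ℕ) + 1 then a k * q (i : ℕ) else 0) := by
    intro k
    rw [Q_apply n hn m p q Q hQ0 hQs k i]
    split_ifs <;> ring
  rw [step1, Finset.sum_congr rfl (fun k _ => expand k), Finset.sum_add_distrib]
  congr 1
  · rw [Finset.sum_ite_eq' Finset.univ i (fun k => a k * p i), if_pos (Finset.mem_univ i)]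
    ring
  · by_cases h : (i : ℕ) + 1 < n
    · rw [dif_pos h]
      have hiff : ∀ k : Fin n, ((k : ℕ) = (i : ℕ) + 1) ↔ k = (⟨(i : ℕ) + 1, h⟩ : Fin n) := by
        intro k
        constructor
        · intro hh; exact Fin.ext hh
        · intro hh; rw [hh]
      simp_rw [hiff]
      rw [Finset.sum_ite_eq' Finset.univ (⟨(i : ℕ) + 1, h⟩ : Fin n) (fun k => a k * q (i : ℕ)),
        if_pos (Finset.mem_univ _)]
      ring
    · rw [dif_neg h]
      apply Finset.sum_eq_zero
      intro k _
      rw [if_neg]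
      intro hh
      exact h (hh ▸ k.isLt)

end STDR

/-- straight tree distinction rule. -/
theorem straight_tree_distinction_rule (n : ℕ) (hn : 0 < n) (m : Equiv.Perm (Fin n))
    (p : Fin n → ℝ) (q : ℕ → ℝ)
    (hp : ∀ i, p i = 1 ∨ p i = -1)
    (hq : ∀ i : ℕ, i + 1 < n → q i = 1 ∨ q i = -1)
    (Q : Fin n → Fin n → ℝ)
    (hQ0 : Q ⟨0, hn⟩ = p ⟨0, hn⟩ • (Pi.single (m ⟨0, hn⟩) 1 : Fin n → ℝ))
    (hQs : ∀ i : ℕ, ∀ h : i + 1 < n,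
      Q ⟨i + 1, h⟩ = q i • (Pi.single (m ⟨i, Nat.lt_of_succ_lt h⟩) 1 : Fin n → ℝ)
        + p ⟨i + 1, h⟩ • (Pi.single (m ⟨i + 1, h⟩) 1 : Fin n → ℝ)) :
    ∃ α₀ : ℝ, 1 ≤ α₀ ∧ ∀ α : ℝ, α₀ < α →
      (EtaOriented (etaVec n α) Q ↔
        (p ⟨n - 1, by omega⟩ = 1 ∧
          ∀ i : ℕ, ∀ h : i + 1 < n,
            (maxLabel m ⟨i, Nat.lt_of_succ_lt h⟩ > (m ⟨i, Nat.lt_of_succ_lt h⟩ : ℕ) →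
              p ⟨i, Nat.lt_of_succ_lt h⟩ * q i = -1) ∧
            (maxLabel m ⟨i, Nat.lt_of_succ_lt h⟩ = (m ⟨i, Nat.lt_of_succ_lt h⟩ : ℕ) →
              p ⟨i, Nat.lt_of_succ_lt h⟩ = 1))) := by
  classical
  have hn1 : (1:ℝ) ≤ (n:ℝ) := by exact_mod_cast hn
  refine ⟨(n : ℝ), hn1, ?_⟩
  intro α hα
  have hα1 : (1:ℝ) ≤ α := le_trans hn1 (le_of_lt hα)
  set Pn : ℕ → ℝ := fun l => if h : l < n then p ⟨l, h⟩ else 1 with hPdef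
  set mnn : ℕ → ℕ := fun l => if h : l < n then (m ⟨l, h⟩ : ℕ) else 0 with hmdef
  have hPv : ∀ l (hl : l < n), Pn l = p ⟨l, hl⟩ := fun l hl => dif_pos hl
  have hmv : ∀ l (hl : l < n), mnn l = (m ⟨l, hl⟩ : ℕ) := fun l hl => dif_pos hl
  have hPn : ∀ i, i < n → Pn i = 1 ∨ Pn i = -1 := fun i hi => by rw [hPv i hi]; exact hp _
  have hinj : ∀ i, i < n → ∀ j, j < n → mnn i = mnn j → i = j := by
    intro i hi j hj he
    rw [hmv i hi, hmv j hj] at he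
    have h2 : m ⟨i, hi⟩ = m ⟨j, hj⟩ := Fin.ext he
    exact congrArg Fin.val (m.injective h2)
  have hMx : ∀ l (hl : l < n), maxLabel m ⟨l, hl⟩ = STDR.Mx n mnn l := by
    intro l hl
    apply le_antisymm
    · apply Finset.sup_le
      intro j hj
      have hj' : l ≤ (j : ℕ) := by
        have := Finset.mem_Ici.1 hj
        exact this
      have hje : (m j : ℕ) = mnn (j : ℕ) := by
        rw [hmv _ j.isLt]
      rw [hje]
      exact Finset.le_sup (Finset.mem_Ico.2 ⟨hj', j.isLt⟩)
    · apply Finset.sup_le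
      intro c hc
      obtain ⟨hc1, hc2⟩ := Finset.mem_Ico.1 hc
      rw [hmv c hc2]
      show ((fun j => ((m j : Fin n) : ℕ)) (⟨c, hc2⟩ : Fin n))
        ≤ (Finset.Ici (⟨l, hl⟩ : Fin n)).sup fun j => ((m j : Fin n) : ℕ)
      exact Finset.le_sup (f := fun j : Fin n => ((m j : Fin n) : ℕ)) (Finset.mem_Ici.2 (Fin.mk_le_mk.2 hc1))
  -- system equivalence
  have hsys : ∀ (a : Fin n → ℝ) (b : ℕ → ℝ), (∀ l (hl : l < n), b l = a ⟨l, hl⟩) →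
      ((∑ k, a k • Q k) = etaVec n α ↔
        ∀ l, l < n → Pn l * b l + (if l + 1 < n then q l * b (l + 1) else 0)
          = α ^ mnn l) := by
    intro a b hb
    constructor
    · intro H l hl
      have hH := congrFun H (m ⟨l, hl⟩)
      rw [STDR.sum_apply_eq n hn m p q Q hQ0 hQs a ⟨l, hl⟩] at hH
      rw [hPv l hl, hmv l hl, hb l hl]
      by_cases h2 : l + 1 < n
      · rw [if_pos h2, hb (l + 1) h2]
        rw [dif_pos h2] at hH
        exact hH
      · rw [if_neg h2]
        rw [dif_neg h2] at hH
        exact hH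
    · intro H
      funext c
      have hc : c = m (m.symm c) := (m.apply_symm_apply c).symm
      rw [hc, STDR.sum_apply_eq n hn m p q Q hQ0 hQs a (m.symm c)]
      set i := m.symm c with hi
      have hl : (i : ℕ) < n := i.isLt
      have hH := H (i : ℕ) hl
      rw [hPv _ hl, hmv _ hl, hb _ hl] at hH
      simp only [Fin.eta] at hH
      by_cases h2 : (i : ℕ) + 1 < n
      · rw [dif_pos h2]
        rw [if_pos h2, hb _ h2] at hH
        exact hH
      · rw [dif_neg h2]
        rw [if_neg h2] at hH
        exact hH
  -- characterization by positivity of the solution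
  have hsol_iff : EtaOriented (etaVec n α) Q ↔
      ∀ l, l < n → 0 < STDR.sol n Pn q mnn α l := by
    constructor
    · rintro ⟨a, hpos, hsum⟩ l hl
      have hb := (hsys a (fun l' => if h : l' < n then a ⟨l', h⟩ else 0)
        (fun l hl => dif_pos hl)).1 hsum
      have huniq := STDR.sol_unique (mn := mnn) (α := α) hPn _ hb l hl
      rw [← huniq, dif_pos hl]
      exact hpos _
    · intro hslp
      refine ⟨fun i => STDR.sol n Pn q mnn α (i : ℕ), fun k => hslp _ k.isLt, ?_⟩
      refine (hsys _ (fun l' => STDR.sol n Pn q mnn α l') (fun l hl => rfl)).2 ?_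
      intro l hl
      exact STDR.sol_spec hPn hl
  -- positivity iff conditions
  have hcond_iff : (∀ l, l < n → 0 < STDR.sol n Pn q mnn α l) ↔
      (∀ l, l < n → STDR.Cond n Pn q mnn l) := by
    constructor
    · intro hpos
      by_contra hnc
      push_neg at hnc
      obtain ⟨l0, hl0, hc0⟩ := hnc
      set S := (Finset.range n).filter (fun l => ¬ STDR.Cond n Pn q mnn l) with hSdef
      have hSne : S.Nonempty := ⟨l0, by
        rw [hSdef, Finset.mem_filter, Finset.mem_range]
        exact ⟨hl0, hc0⟩⟩
      set l := S.max' hSne with hldef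
      have hlS : l ∈ S := S.max'_mem hSne
      rw [hSdef, Finset.mem_filter, Finset.mem_range] at hlS
      have hl : l < n := hlS.1
      have hlc : ¬ STDR.Cond n Pn q mnn l := hlS.2
      have habove : ∀ i, l + 1 ≤ i → i < n → STDR.Cond n Pn q mnn i := by
        intro i hi1 hi2
        by_contra hci
        have hiS : i ∈ S := by
          rw [hSdef, Finset.mem_filter, Finset.mem_range]
          exact ⟨hi2, hci⟩
        have := S.le_max' i hiS
        omega
      have h1 := STDR.sol_neg_bound (mn := mnn) hα1 hPn hq hinj l hl habove hlc
      have h2 := STDR.bound_pos (mn := mnn) hα hinj hl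
      have h3 := hpos l hl
      linarith
    · intro hcond l hl
      have h1 := STDR.sol_pos_bound (mn := mnn) hα1 hPn hq hinj l hl
        (fun i _ hi2 => hcond i hi2)
      have h2 := STDR.bound_pos (mn := mnn) hα hinj hl
      linarith
  rw [hsol_iff, hcond_iff]
  -- conditions iff the stated sign rules
  constructor
  · intro hc
    constructor
    · have hl : n - 1 < n := by omega
      have h2 : ¬ (n - 1 + 1 < n) := by omega
      have := (hc (n - 1) hl).2 (STDR.Mx_last hl h2)
      rwa [hPv _ hl] at this
    · intro i h
      have hl : i < n := Nat.lt_of_succ_lt h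
      have hC := hc i hl
      constructor
      · intro hgt
        rw [hMx i hl, ← hmv i hl] at hgt
        have := hC.1 hgt
        rwa [hPv i hl] at this
      · intro heq
        rw [hMx i hl, ← hmv i hl] at heq
        have := hC.2 heq
        rwa [hPv i hl] at this
  · rintro ⟨h1, h2⟩ l hl
    by_cases hl1 : l + 1 < n
    · constructor
      · intro hlt
        rw [hPv l hl]
        refine (h2 l hl1).1 ?_
        rw [hMx l hl, ← hmv l hl]
        exact hlt
      · intro heq
        rw [hPv l hl]
        refine (h2 l hl1).2 ?_
        rw [hMx l hl, ← hmv l hl]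
        exact heq
    · have hlast : l = n - 1 := by omega
      have hMl : STDR.Mx n mnn l = mnn l := STDR.Mx_last hl hl1
      constructor
      · intro hlt; omega
      · intro _
        rw [hPv l hl]
        have he : (⟨l, hl⟩ : Fin n) = ⟨n - 1, by omega⟩ := Fin.ext (by simp [hlast])
        rw [he]
        exact h1
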